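/- For H ∈ (0, 1/2), the function t ↦ C_H(t) = ½((t+1)^{2H} − 2 t^{2H} + (t−1)^{2H}) is monotonically increasing on [1, ∞). -/

import Mathlib

/-- The covariance function of fractional Gaussian noise with Hurst index `H`. -/
noncomputable def fgnC (H t : ℝ) : ℝ :=
  (|t + 1| ^ (2 * H) - 2 * |t| ^ (2 * H) + |t - 1| ^ (2 * H)) / 2

private lemma phi_mono {a : ℝ} (ha : a < 0) :
    MonotoneOn (fun s : ℝ => (s + 1) ^ a - s ^ a) (Set.Ioi 0) := by
  have hcont : ContinuousOn (fun s : ℝ => (s + 1) ^ a - s ^ a) (Set.Ioi 0) := by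
    apply ContinuousOn.sub
    · exact (continuousOn_id.add continuousOn_const).rpow_const fun x hx =>
        Or.inl (by simp only [Set.mem_Ioi] at hx; exact ne_of_gt (show (0:ℝ) < x + 1 by linarith))
    · exact continuousOn_id.rpow_const fun x hx => Or.inl (ne_of_gt hx)
  have hd : ∀ x ∈ Set.Ioi (0:ℝ),
      HasDerivAt (fun s : ℝ => (s + 1) ^ a - s ^ a)
        (1 * a * (x + 1) ^ (a - 1) - 1 * a * x ^ (a - 1)) x := by
    intro x hx0
    have hx0 : (0:ℝ) < x := hx0
    exact (((hasDerivAt_id x).add_const 1).rpow_const (Or.inl (by positivity))).sub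
      ((hasDerivAt_id x).rpow_const (Or.inl (ne_of_gt hx0)))
  apply monotoneOn_of_deriv_nonneg (convex_Ioi 0) hcont
  · intro x hx
    rw [interior_Ioi] at hx
    exact (hd x hx).differentiableAt.differentiableWithinAt
  intro x hx
  rw [interior_Ioi] at hx
  have hx0 : (0:ℝ) < x := hx
  rw [(hd x hx).deriv]
  have hle : (x + 1) ^ (a - 1) ≤ x ^ (a - 1) :=
    Real.rpow_le_rpow_of_nonpos hx0 (by linarith) (by linarith)
  nlinarith

theorem fgnC_monotoneOn (H : ℝ) (hH : H ∈ Set.Ioo (0 : ℝ) (1 / 2)) :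
    MonotoneOn (fgnC H) (Set.Ici (1 : ℝ)) := by
  obtain ⟨hH0, hH2⟩ := hH
  have h2H : (0:ℝ) < 2 * H := by linarith
  have hcont : ContinuousOn (fgnC H) (Set.Ici 1) := by
    apply Continuous.continuousOn
    unfold fgnC
    have c1 : Continuous fun t : ℝ => |t + 1| ^ (2 * H) :=
      (continuous_id.add continuous_const).abs.rpow_const fun x => Or.inr h2H.le
    have c2 : Continuous fun t : ℝ => |t| ^ (2 * H) :=
      continuous_abs.rpow_const fun x => Or.inr h2H.le
    have c3 : Continuous fun t : ℝ => |t - 1| ^ (2 * H) :=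
      (continuous_id.sub continuous_const).abs.rpow_const fun x => Or.inr h2H.le
    exact ((c1.sub (continuous_const.mul c2)).add c3).div_const 2
  have hd : ∀ x ∈ Set.Ioi (1:ℝ),
      HasDerivAt (fgnC H)
        ((1 * (2 * H) * (x + 1) ^ (2 * H - 1) - 2 * (1 * (2 * H) * x ^ (2 * H - 1))
          + 1 * (2 * H) * (x - 1) ^ (2 * H - 1)) / 2) x := by
    intro x hx1
    have hx1 : (1:ℝ) < x := hx1
    have h1 : HasDerivAt (fun t : ℝ => (t + 1) ^ (2 * H)) (1 * (2 * H) * (x + 1) ^ (2 * H - 1)) x :=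
      ((hasDerivAt_id x).add_const 1).rpow_const (Or.inl (by positivity))
    have h2 : HasDerivAt (fun t : ℝ => t ^ (2 * H)) (1 * (2 * H) * x ^ (2 * H - 1)) x :=
      (hasDerivAt_id x).rpow_const (Or.inl (by positivity))
    have h3 : HasDerivAt (fun t : ℝ => (t - 1) ^ (2 * H)) (1 * (2 * H) * (x - 1) ^ (2 * H - 1)) x :=
      ((hasDerivAt_id x).sub_const 1).rpow_const (Or.inl (by simp only [id]; intro h; nlinarith))
    have hder := (((h1.sub (h2.const_mul 2)).add h3).div_const 2)
    refine HasDerivAt.congr_of_eventuallyEq hder ?_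
    filter_upwards [isOpen_Ioi.mem_nhds hx1] with t ht
    have ht1 : (1:ℝ) < t := ht
    unfold fgnC
    rw [abs_of_pos (by linarith : (0:ℝ) < t + 1), abs_of_pos (by linarith : (0:ℝ) < t),
      abs_of_pos (by linarith : (0:ℝ) < t - 1)]
    rfl
  apply monotoneOn_of_deriv_nonneg (convex_Ici 1) hcont
  · intro x hx
    rw [interior_Ici] at hx
    exact (hd x hx).differentiableAt.differentiableWithinAt
  intro x hx
  rw [interior_Ici] at hx
  have hx1 : (1:ℝ) < x := hx
  rw [(hd x hx).deriv]
  have key := phi_mono (by linarith : 2 * H - 1 < 0)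
    (Set.mem_Ioi.mpr (by linarith : (0:ℝ) < x - 1)) (Set.mem_Ioi.mpr (by linarith : (0:ℝ) < x))
    (by linarith : x - 1 ≤ x)
  simp only [sub_add_cancel] at key
  nlinarith [key]
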